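/- Let K be an infinite field of characteristic different from 2 and 3, let n ≥ 3, and let F₂ be the free associative unital K-algebra on two generators x, y. Then [x, y]^{n-2} does NOT belong to T^{(n)}(F₂); consequently the nilpotency index of the commutator of the free generators in F₂/T^{(n)}(F₂) equals n−1. -/

import Mathlib

/-- The right-normed commutator: `rnComm a [b₁, …, b_k] = [a, b₁, …, b_k]`,
where `[u, v] = u * v - v * u`. -/
def rnComm {A : Type*} [Ring A] : A → List A → A
  | a, [] => a
  | a, b :: l => rnComm (a * b - b * a) l

/-- `Tideal A m` is the two-sided ideal `T⁽ᵐ⁾(A)` of `A` generated by all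
right-normed commutators `[a₁, …, a_m]` of length `m`. -/
def Tideal (A : Type*) [Ring A] (m : ℕ) : TwoSidedIdeal A :=
  TwoSidedIdeal.span { x | ∃ (a : A) (l : List A), l.length + 1 = m ∧ rnComm a l = x }

namespace CommPowAux

def IsRN {A : Type*} [Ring A] : ℕ → A → Prop
  | 0, _ => True
  | k+1, v => ∃ w b, IsRN k w ∧ v = w * b - b * w

theorem IsRN.down {A : Type*} [Ring A] : ∀ {k : ℕ} {v : A}, IsRN (k+1) v → IsRN k v
  | 0, _, _ => trivial
  | (k+1), v, ⟨w, b, hw, hv⟩ => ⟨w, b, IsRN.down hw, hv⟩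

theorem IsRN.down_add {A : Type*} [Ring A] : ∀ (d : ℕ) {k : ℕ} {v : A},
    IsRN (k + d) v → IsRN k v
  | 0, _, _, h => h
  | (d+1), k, v, h => IsRN.down_add d (IsRN.down (k := k + d) h)

theorem IsRN.mono {A : Type*} [Ring A] {j k : ℕ} (h : j ≤ k) {v : A} (hv : IsRN k v) :
    IsRN j v := by
  obtain ⟨d, rfl⟩ := Nat.exists_eq_add_of_le h
  exact IsRN.down_add d hv

theorem IsRN.succ {A : Type*} [Ring A] {k : ℕ} {w : A} (b : A) (hw : IsRN k w) :
    IsRN (k+1) (w * b - b * w) := ⟨w, b, hw, rfl⟩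

theorem rnComm_snoc {A : Type*} [Ring A] (a b : A) (l : List A) :
    rnComm a (l ++ [b]) = rnComm a l * b - b * rnComm a l := by
  induction l generalizing a with
  | nil => rfl
  | cons c l ih => exact ih _

theorem IsRN.exists_rnComm {A : Type*} [Ring A] : ∀ {k : ℕ} {v : A}, IsRN k v →
    ∃ a l, l.length = k ∧ rnComm a l = v
  | 0, v, _ => ⟨v, [], rfl, rfl⟩
  | (k+1), v, ⟨w, b, hw, hv⟩ => by
    obtain ⟨a, l, hl, hc⟩ := IsRN.exists_rnComm hw
    exact ⟨a, l ++ [b], by simp [hl], by rw [rnComm_snoc, hc, hv]⟩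

theorem IsRN.mem_Tideal {A : Type*} [Ring A] {n : ℕ} (hn : 1 ≤ n) {v : A}
    (hv : IsRN (n-1) v) : v ∈ Tideal A n := by
  obtain ⟨a, l, hl, hc⟩ := hv.exists_rnComm
  exact TwoSidedIdeal.subset_span ⟨a, l, by omega, hc⟩

section Membership

variable (K : Type*) [Field K]

noncomputable def xg : FreeAlgebra K (Fin 2) := FreeAlgebra.ι K 0
noncomputable def yg : FreeAlgebra K (Fin 2) := FreeAlgebra.ι K 1
noncomputable def cg : FreeAlgebra K (Fin 2) := xg K * yg K - yg K * xg K

def Gs (j : ℕ) : Set (FreeAlgebra K (Fin 2)) :=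
  {v | ∃ r w e, IsRN (j+1) w ∧ (e = xg K ∨ e = yg K) ∧ v = r * (w * e - e * w)}

variable (n : ℕ)

noncomputable def Ms (j : ℕ) : Submodule K (FreeAlgebra K (Fin 2)) :=
  Submodule.span K (Gs K j ∪ {v | v ∈ Tideal (FreeAlgebra K (Fin 2)) n})

theorem mem_Ms_of_T {j : ℕ} {v : FreeAlgebra K (Fin 2)}
    (h : v ∈ Tideal (FreeAlgebra K (Fin 2)) n) : v ∈ Ms K n j :=
  Submodule.subset_span (Or.inr h)

theorem mem_Ms_of_G {j : ℕ} {v : FreeAlgebra K (Fin 2)} (h : v ∈ Gs K j) : v ∈ Ms K n j :=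
  Submodule.subset_span (Or.inl h)

theorem T_smul {v : FreeAlgebra K (Fin 2)} (a : K)
    (h : v ∈ Tideal (FreeAlgebra K (Fin 2)) n) :
    a • v ∈ Tideal (FreeAlgebra K (Fin 2)) n := by
  rw [Algebra.smul_def]
  exact TwoSidedIdeal.mul_mem_left _ _ _ h

theorem Ms_mono {j : ℕ} : Ms K n (j+1) ≤ Ms K n j := by
  apply Submodule.span_mono
  apply Set.union_subset_union_left
  rintro v ⟨r, w, e, hw, he, rfl⟩
  exact ⟨r, w, e, hw.down, he, rfl⟩

theorem Ms_mul_left {j : ℕ} {v : FreeAlgebra K (Fin 2)} (hv : v ∈ Ms K n j)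
    (r : FreeAlgebra K (Fin 2)) : r * v ∈ Ms K n j := by
  induction hv using Submodule.span_induction with
  | mem v h =>
    rcases h with ⟨r', w, e, hw, he, rfl⟩ | h
    · exact mem_Ms_of_G K n ⟨r * r', w, e, hw, he, by rw [mul_assoc]⟩
    · exact mem_Ms_of_T K n (TwoSidedIdeal.mul_mem_left _ _ _ h)
  | zero => rw [mul_zero]; exact zero_mem _
  | add x y hx hy ihx ihy => rw [mul_add]; exact add_mem ihx ihy
  | smul a x hx ihx => rw [mul_smul_comm]; exact Submodule.smul_mem _ _ ihx

/-- `PhiP j` : every right-normed commutator with at least `j+1` brackets is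
central modulo `Ms j`. -/
def PhiP (j : ℕ) : Prop :=
  ∀ X : FreeAlgebra K (Fin 2), IsRN (j+1) X →
    ∀ z : FreeAlgebra K (Fin 2), X * z - z * X ∈ Ms K n j

theorem Ms_mul_right {j : ℕ} (hPhi : PhiP K n j) {v : FreeAlgebra K (Fin 2)}
    (hv : v ∈ Ms K n j) (r : FreeAlgebra K (Fin 2)) : v * r ∈ Ms K n j := by
  induction hv using Submodule.span_induction with
  | mem v h =>
    rcases h with ⟨r', w, e, hw, he, rfl⟩ | h
    · have hX : IsRN (j+1) (w * e - e * w) := IsRN.down ⟨w, e, hw, rfl⟩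
      have hc : (w * e - e * w) * r - r * (w * e - e * w) ∈ Ms K n j := hPhi _ hX r
      have key : (r' * (w * e - e * w)) * r
          = r' * (r * (w * e - e * w)) + r' * ((w * e - e * w) * r - r * (w * e - e * w)) := by
        noncomm_ring
      rw [key]
      exact add_mem (mem_Ms_of_G K n ⟨r' * r, w, e, hw, he, by rw [mul_assoc]⟩)
        (Ms_mul_left K n hc r')
    · exact mem_Ms_of_T K n (TwoSidedIdeal.mul_mem_right _ _ _ h)
  | zero => rw [zero_mul]; exact zero_mem _
  | add x y hx hy ihx ihy => rw [add_mul]; exact add_mem ihx ihy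
  | smul a x hx ihx => rw [smul_mul_assoc]; exact Submodule.smul_mem _ _ ihx

theorem phi_base (hn : 3 ≤ n) {j : ℕ} (hj : n - 2 ≤ j) : PhiP K n j := by
  intro X hX z
  have hX' : IsRN (n-1) X := hX.mono (by omega)
  have hXT : X ∈ Tideal (FreeAlgebra K (Fin 2)) n := hX'.mem_Tideal (by omega)
  exact mem_Ms_of_T K n (TwoSidedIdeal.sub_mem _
    (TwoSidedIdeal.mul_mem_right _ _ _ hXT) (TwoSidedIdeal.mul_mem_left _ _ _ hXT))

theorem phi_step {j : ℕ} (hPhi1 : PhiP K n (j+1)) : PhiP K n j := by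
  intro X hX z
  induction z using FreeAlgebra.induction with
  | grade0 r =>
    rw [show X * algebraMap K _ r - algebraMap K _ r * X = 0 by
      rw [← Algebra.commutes r X, sub_self]]
    exact zero_mem _
  | grade1 i =>
    fin_cases i
    · exact mem_Ms_of_G K n ⟨1, X, xg K, hX, Or.inl rfl, by rw [one_mul]; rfl⟩
    · exact mem_Ms_of_G K n ⟨1, X, yg K, hX, Or.inr rfl, by rw [one_mul]; rfl⟩
  | mul z₁ z₂ h₁ h₂ =>
    have hX1 : IsRN (j+1+1) (X * z₁ - z₁ * X) := ⟨X, z₁, hX, rfl⟩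
    have e1 : z₂ * (X * z₁ - z₁ * X) ∈ Ms K n j := Ms_mul_left K n h₁ z₂
    have e2 : (X * z₁ - z₁ * X) * z₂ - z₂ * (X * z₁ - z₁ * X) ∈ Ms K n j :=
      Ms_mono K n (hPhi1 _ hX1 z₂)
    have e3 : z₁ * (X * z₂ - z₂ * X) ∈ Ms K n j := Ms_mul_left K n h₂ z₁
    have key : X * (z₁ * z₂) - (z₁ * z₂) * X
        = z₂ * (X * z₁ - z₁ * X) + ((X * z₁ - z₁ * X) * z₂ - z₂ * (X * z₁ - z₁ * X))
          + z₁ * (X * z₂ - z₂ * X) := by noncomm_ring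
    rw [key]
    exact add_mem (add_mem e1 e2) e3
  | add z₁ z₂ h₁ h₂ =>
    have key : X * (z₁ + z₂) - (z₁ + z₂) * X
        = (X * z₁ - z₁ * X) + (X * z₂ - z₂ * X) := by noncomm_ring
    rw [key]
    exact add_mem h₁ h₂

theorem phi_all (hn : 3 ≤ n) : ∀ j, PhiP K n j := by
  have H : ∀ m j, n - 2 ≤ j + m → PhiP K n j := by
    intro m
    induction m with
    | zero => exact fun j hj => phi_base K n hn (by omega)
    | succ m ih =>
      intro j hj
      by_cases h : n - 2 ≤ j + m
      · exact ih j h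
      · exact phi_step K n (ih (j+1) (by omega))
  exact fun j => H n j (by omega)

theorem star_lemma {j : ℕ} (hPhi : PhiP K n j) {u : FreeAlgebra K (Fin 2)} (hu : IsRN j u)
    {d : FreeAlgebra K (Fin 2)} (hd : d = xg K ∨ d = yg K) (a b : FreeAlgebra K (Fin 2)) :
    (u*a - a*u) * (b*d - d*b) + (u*b - b*u) * (a*d - d*a) ∈ Ms K n j := by
  have h1 : (u*(a*b) - (a*b)*u)*d - d*(u*(a*b) - (a*b)*u) ∈ Ms K n j :=
    mem_Ms_of_G K n ⟨1, u*(a*b) - (a*b)*u, d, ⟨u, a*b, hu, rfl⟩, hd, by rw [one_mul]⟩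
  have h2 : ((u*a - a*u)*d - d*(u*a - a*u)) * b ∈ Ms K n j := by
    have hX2 : IsRN (j+1) ((u*a - a*u)*d - d*(u*a - a*u)) :=
      IsRN.down ⟨u*a - a*u, d, ⟨u, a, hu, rfl⟩, rfl⟩
    have hbX : b * ((u*a - a*u)*d - d*(u*a - a*u)) ∈ Ms K n j :=
      mem_Ms_of_G K n ⟨b, u*a - a*u, d, ⟨u, a, hu, rfl⟩, hd, rfl⟩
    have hcm := hPhi _ hX2 b
    have key : ((u*a - a*u)*d - d*(u*a - a*u)) * b
        = b * ((u*a - a*u)*d - d*(u*a - a*u))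
          + (((u*a - a*u)*d - d*(u*a - a*u)) * b - b * ((u*a - a*u)*d - d*(u*a - a*u))) := by
      noncomm_ring
    rw [key]; exact add_mem hbX hcm
  have h3 : a * ((u*b - b*u)*d - d*(u*b - b*u)) ∈ Ms K n j :=
    mem_Ms_of_G K n ⟨a, u*b - b*u, d, ⟨u, b, hu, rfl⟩, hd, rfl⟩
  have h4 : (u*b - b*u)*(a*d - d*a) - (a*d - d*a)*(u*b - b*u) ∈ Ms K n j :=
    hPhi _ ⟨u, b, hu, rfl⟩ _
  have key : (u*a - a*u) * (b*d - d*b) + (u*b - b*u) * (a*d - d*a)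
      = ((u*(a*b) - (a*b)*u)*d - d*(u*(a*b) - (a*b)*u))
        - ((u*a - a*u)*d - d*(u*a - a*u)) * b
        - a * ((u*b - b*u)*d - d*(u*b - b*u))
        + ((u*b - b*u)*(a*d - d*a) - (a*d - d*a)*(u*b - b*u)) := by noncomm_ring
  rw [key]
  exact add_mem (sub_mem (sub_mem h1 h2) h3) h4

theorem psi_lemma (h2 : (2:K) ≠ 0) {j : ℕ} (hPhi : PhiP K n j)
    {u : FreeAlgebra K (Fin 2)} (hu : IsRN j u) (z : FreeAlgebra K (Fin 2)) :
    (u*z - z*u) * cg K ∈ Ms K n j := by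
  induction z using FreeAlgebra.induction with
  | grade0 r =>
    rw [show (u * algebraMap K _ r - algebraMap K _ r * u) * cg K = 0 by
      rw [← Algebra.commutes r u, sub_self, zero_mul]]
    exact zero_mem _
  | grade1 i =>
    fin_cases i
    · -- z = x
      have hs := star_lemma K n hPhi hu (Or.inr rfl) (xg K) (xg K)
      have hs' : (u * xg K - xg K * u) * cg K + (u * xg K - xg K * u) * cg K ∈ Ms K n j := by
        simpa [cg] using hs
      have key : (u * xg K - xg K * u) * cg K
          = (2:K)⁻¹ • ((u * xg K - xg K * u) * cg K + (u * xg K - xg K * u) * cg K) := by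
        rw [← two_smul K ((u * xg K - xg K * u) * cg K), smul_smul, inv_mul_cancel₀ h2, one_smul]
      show (u * xg K - xg K * u) * cg K ∈ Ms K n j
      rw [key]
      exact Submodule.smul_mem _ _ hs'
    · -- z = y
      have hs := star_lemma K n hPhi hu (Or.inl rfl) (yg K) (yg K)
      have hs' : (u * yg K - yg K * u) * (yg K * xg K - xg K * yg K)
          + (u * yg K - yg K * u) * (yg K * xg K - xg K * yg K) ∈ Ms K n j := by
        simpa using hs
      have hmem : (u * yg K - yg K * u) * (yg K * xg K - xg K * yg K) ∈ Ms K n j := by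
        have key : (u * yg K - yg K * u) * (yg K * xg K - xg K * yg K)
            = (2:K)⁻¹ • ((u * yg K - yg K * u) * (yg K * xg K - xg K * yg K)
              + (u * yg K - yg K * u) * (yg K * xg K - xg K * yg K)) := by
          rw [← two_smul K ((u * yg K - yg K * u) * (yg K * xg K - xg K * yg K)),
            smul_smul, inv_mul_cancel₀ h2, one_smul]
        rw [key]
        exact Submodule.smul_mem _ _ hs'
      have key2 : (u * yg K - yg K * u) * cg K
          = - ((u * yg K - yg K * u) * (yg K * xg K - xg K * yg K)) := by
        rw [cg]; noncomm_ring
      show (u * yg K - yg K * u) * cg K ∈ Ms K n j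
      rw [key2]
      exact neg_mem hmem
  | mul z₁ z₂ h₁ h₂ =>
    have hX : IsRN (j+1) (u*z₁ - z₁*u) := ⟨u, z₁, hu, rfl⟩
    have e2 : ((u*z₁ - z₁*u)*z₂ - z₂*(u*z₁ - z₁*u)) * cg K ∈ Ms K n j :=
      Ms_mul_right K n hPhi (hPhi _ hX z₂) (cg K)
    have e1 : z₂ * ((u*z₁ - z₁*u) * cg K) ∈ Ms K n j := Ms_mul_left K n h₁ z₂
    have e3 : z₁ * ((u*z₂ - z₂*u) * cg K) ∈ Ms K n j := Ms_mul_left K n h₂ z₁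
    have key : (u*(z₁*z₂) - (z₁*z₂)*u) * cg K
        = z₂ * ((u*z₁ - z₁*u) * cg K) + ((u*z₁ - z₁*u)*z₂ - z₂*(u*z₁ - z₁*u)) * cg K
          + z₁ * ((u*z₂ - z₂*u) * cg K) := by noncomm_ring
    rw [key]
    exact add_mem (add_mem e1 e2) e3
  | add z₁ z₂ h₁ h₂ =>
    have key : (u*(z₁+z₂) - (z₁+z₂)*u) * cg K
        = (u*z₁ - z₁*u) * cg K + (u*z₂ - z₂*u) * cg K := by noncomm_ring
    rw [key]
    exact add_mem h₁ h₂

theorem cl_lemma (h2 : (2:K) ≠ 0) {j : ℕ} (hPhi : PhiP K n j)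
    {w : FreeAlgebra K (Fin 2)} (hw : IsRN j w)
    {e : FreeAlgebra K (Fin 2)} (he : e = xg K ∨ e = yg K) (r : FreeAlgebra K (Fin 2)) :
    cg K * (r * (w*e - e*w)) ∈ Ms K n j := by
  have hWE : IsRN (j+1) (w*e - e*w) := ⟨w, e, hw, rfl⟩
  have t2 : (w*e - e*w) * (cg K * r) - (cg K * r) * (w*e - e*w) ∈ Ms K n j := hPhi _ hWE _
  have t1 : ((w*e - e*w) * cg K) * r ∈ Ms K n j :=
    Ms_mul_right K n hPhi (psi_lemma K n h2 hPhi hw e) r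
  have key : cg K * (r * (w*e - e*w))
      = ((w*e - e*w) * cg K) * r
        - ((w*e - e*w) * (cg K * r) - (cg K * r) * (w*e - e*w)) := by noncomm_ring
  rw [key]
  exact sub_mem t1 t2

theorem d_all (hn : 3 ≤ n) (h2 : (2:K) ≠ 0) :
    ∀ m t, n - 2 ≤ t + m → ∀ {w}, IsRN t w →
    ∀ {e}, (e = xg K ∨ e = yg K) → ∀ r,
    cg K ^ (n-2-t) * (r * (w*e - e*w)) ∈ Tideal (FreeAlgebra K (Fin 2)) n := by
  intro m
  induction m with
  | zero =>
    intro t ht w hw e he r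
    rw [show n-2-t = 0 by omega, pow_zero, one_mul]
    have hWE : IsRN (n-1) (w*e - e*w) := IsRN.mono (by omega) (IsRN.succ (k := t) e hw)
    exact TwoSidedIdeal.mul_mem_left _ _ _ (hWE.mem_Tideal (by omega))
  | succ m ih =>
    intro t ht w hw e he r
    by_cases hcase : n - 2 ≤ t + m
    · exact ih t hcase hw he r
    · have hPhi := phi_all K n hn t
      have hM : cg K * (r * (w*e - e*w)) ∈ Ms K n t := cl_lemma K n h2 hPhi hw he r
      rw [show n-2-t = (n-2-(t+1)) + 1 by omega, pow_succ, mul_assoc]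
      refine Submodule.span_induction ?_ ?_ ?_ ?_ hM
      · rintro v (⟨r', w', e', hw', he', rfl⟩ | hT)
        · exact ih (t+1) (by omega) hw' he' r'
        · exact TwoSidedIdeal.mul_mem_left _ _ _ hT
      · rw [mul_zero]; exact TwoSidedIdeal.zero_mem _
      · intro v₁ v₂ _ _ ih1 ih2
        rw [mul_add]; exact TwoSidedIdeal.add_mem _ ih1 ih2
      · intro a v _ ihv
        rw [mul_smul_comm]; exact T_smul K n a ihv

theorem mem_part (hn : 3 ≤ n) (h2 : (2:K) ≠ 0) :
    cg K ^ (n-1) ∈ Tideal (FreeAlgebra K (Fin 2)) n := by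
  have h := d_all K n hn h2 n 0 (by omega) (w := xg K) trivial (e := yg K) (Or.inr rfl) 1
  rw [one_mul] at h
  rw [show n-1 = (n-2)+1 by omega, pow_succ]
  rw [show n-2-0 = n-2 by omega] at h
  exact h

end Membership

theorem pow_eq_zero_of_neg_pow_eq_zero {R : Type*} [Ring R] {a : R} {k : ℕ}
    (h0 : (-a) ^ k = 0) : a ^ k = 0 := by
  rcases neg_one_pow_eq_or R k with h | h
  · rw [neg_pow, h, one_mul] at h0; exact h0
  · rw [neg_pow, h, neg_one_mul, neg_eq_zero] at h0; exact h0

theorem map_rnComm {A B : Type*} [Ring A] [Ring B] (φ : A →+* B) (a : A) (l : List A) :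
    φ (rnComm a l) = rnComm (φ a) (l.map φ) := by
  induction l generalizing a with
  | nil => rfl
  | cons b l ih => simpa [rnComm, map_sub, map_mul] using ih (a * b - b * a)

section Model

variable (K : Type*) [Field K] (L : ℕ)

/-- The module `⊕_{j<L} K[u] tʲ`. -/
abbrev Wm := Fin L → Polynomial K

/-- Multiplication by `u`. -/
noncomputable def Xop : Module.End K (Wm K L) where
  toFun f := fun j => Polynomial.X * f j
  map_add' f g := by funext j; simp [mul_add]
  map_smul' a f := by funext j; simp [Polynomial.smul_eq_C_mul]; ring

/-- The operator `t ∂/∂u`. -/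
noncomputable def Yop : Module.End K (Wm K L) where
  toFun f := fun j => if h : (j : ℕ) = 0 then 0 else
    Polynomial.derivative (f ⟨(j : ℕ) - 1, lt_of_le_of_lt (Nat.sub_le _ _) j.isLt⟩)
  map_add' f g := by funext j; split <;> rename_i h <;> simp [h]
  map_smul' a f := by funext j; split <;> rename_i h <;> simp [h]

/-- Multiplication by `t`. -/
noncomputable def Top : Module.End K (Wm K L) where
  toFun f := fun j => if h : (j : ℕ) = 0 then 0 else
    f ⟨(j : ℕ) - 1, lt_of_le_of_lt (Nat.sub_le _ _) j.isLt⟩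
  map_add' f g := by funext j; split <;> rename_i h <;> simp [h]
  map_smul' a f := by funext j; split <;> rename_i h <;> simp [h]

theorem comm_XY : Xop K L * Yop K L - Yop K L * Xop K L = - Top K L := by
  refine LinearMap.ext fun f => funext fun j => ?_
  simp only [LinearMap.sub_apply, Module.End.mul_apply, LinearMap.neg_apply, Xop, Yop, Top,
    LinearMap.coe_mk, AddHom.coe_mk, Pi.sub_apply, Pi.neg_apply]
  split
  · simp
  · simp [Polynomial.derivative_mul]

theorem comm_TX : Top K L * Xop K L = Xop K L * Top K L := by
  refine LinearMap.ext fun f => funext fun j => ?_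
  simp only [Module.End.mul_apply, Xop, Top, LinearMap.coe_mk, AddHom.coe_mk]
  split <;> simp

theorem comm_TY : Top K L * Yop K L = Yop K L * Top K L := by
  refine LinearMap.ext fun f => funext fun j => ?_
  simp only [Module.End.mul_apply, Yop, Top, LinearMap.coe_mk, AddHom.coe_mk]
  split <;> simp
  split <;> simp

theorem Tpow_apply (k : ℕ) (f : Wm K L) (j : Fin L) :
    ((Top K L ^ k) f) j = if h : (j : ℕ) < k then 0 else
      f ⟨(j : ℕ) - k, lt_of_le_of_lt (Nat.sub_le _ _) j.isLt⟩ := by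
  induction k generalizing f j with
  | zero => simp
  | succ k ih =>
    rw [pow_succ, Module.End.mul_apply, ih]
    simp only [Top, LinearMap.coe_mk, AddHom.coe_mk]
    split_ifs <;> first
      | rfl
      | omega
      | (exact absurd rfl (by omega))
      | (exact congrArg f (Fin.ext (by omega)))

theorem Tpow_L : Top K L ^ L = 0 := by
  refine LinearMap.ext fun f => funext fun j => ?_
  rw [Tpow_apply, dif_pos j.isLt]
  simp

theorem Tpow_ne (hL : 1 ≤ L) : Top K L ^ (L-1) ≠ 0 := by
  intro h0
  have h1 := congrFun (DFunLike.congr_fun h0 (fun _ => (1 : Polynomial K))) ⟨L-1, by omega⟩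
  rw [Tpow_apply] at h1
  rw [dif_neg (by simp)] at h1
  simp at h1

/-- The subalgebra generated by `Xop` and `Yop`. -/
noncomputable def CTa : Subalgebra K (Module.End K (Wm K L)) :=
  Algebra.adjoin K ({Xop K L, Yop K L} : Set (Module.End K (Wm K L)))

theorem Xop_mem : Xop K L ∈ CTa K L := Algebra.subset_adjoin (Set.mem_insert _ _)

theorem Yop_mem : Yop K L ∈ CTa K L :=
  Algebra.subset_adjoin (Set.mem_insert_of_mem _ rfl)

theorem Top_eq : Top K L = Yop K L * Xop K L - Xop K L * Yop K L := by
  rw [← neg_neg (Top K L), ← comm_XY K L]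
  noncomm_ring

theorem Top_mem : Top K L ∈ CTa K L := by
  rw [Top_eq]
  exact sub_mem (mul_mem (Yop_mem K L) (Xop_mem K L)) (mul_mem (Xop_mem K L) (Yop_mem K L))

theorem Top_comm (q : Module.End K (Wm K L)) (hq : q ∈ CTa K L) :
    Top K L * q = q * Top K L := by
  induction hq using Algebra.adjoin_induction with
  | mem z hz =>
    rcases hz with rfl | hz
    · exact comm_TX K L
    · rw [Set.mem_singleton_iff] at hz
      subst hz
      exact comm_TY K L
  | algebraMap r => exact (Algebra.commutes r (Top K L)).symm
  | add x y hx hy ihx ihy => rw [mul_add, add_mul, ihx, ihy]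
  | mul x y hx hy ihx ihy => rw [← mul_assoc, ihx, mul_assoc, ihy, mul_assoc]

theorem Tpow_comm (k : ℕ) (q : Module.End K (Wm K L)) (hq : q ∈ CTa K L) :
    Top K L ^ k * q = q * Top K L ^ k := by
  have h : Commute (Top K L) q := Top_comm K L q hq
  exact (Commute.pow_left h k).eq

theorem commMod (p : Module.End K (Wm K L)) (hp : p ∈ CTa K L)
    (q : Module.End K (Wm K L)) (hq : q ∈ CTa K L) :
    ∃ r, r ∈ CTa K L ∧ p * q - q * p = Top K L * r := by
  induction hp, hq using Algebra.adjoin_induction₂ with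
  | mem_mem x y hx hy =>
    rcases hx with rfl | hx
    · rcases hy with rfl | hy
      · exact ⟨0, zero_mem _, by rw [mul_zero, sub_self]⟩
      · rw [Set.mem_singleton_iff] at hy; subst hy
        exact ⟨-1, neg_mem (one_mem _), by rw [comm_XY K L]; exact (mul_neg_one (Top K L)).symm⟩
    · rw [Set.mem_singleton_iff] at hx; subst hx
      rcases hy with rfl | hy
      · exact ⟨1, one_mem _, by rw [mul_one, ← Top_eq]⟩
      · rw [Set.mem_singleton_iff] at hy; subst hy
        exact ⟨0, zero_mem _, by rw [mul_zero, sub_self]⟩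
  | algebraMap_both r₁ r₂ =>
    exact ⟨0, zero_mem _, by rw [mul_zero, ← map_mul, ← map_mul, mul_comm r₁ r₂, sub_self]⟩
  | algebraMap_left r x hx =>
    exact ⟨0, zero_mem _, by rw [mul_zero, ← Algebra.commutes r x, sub_self]⟩
  | algebraMap_right r x hx =>
    exact ⟨0, zero_mem _, by rw [mul_zero, Algebra.commutes r x, sub_self]⟩
  | add_left x y z hx hy hz h₁ h₂ =>
    obtain ⟨r₁, hr₁, e₁⟩ := h₁
    obtain ⟨r₂, hr₂, e₂⟩ := h₂
    refine ⟨r₁ + r₂, add_mem hr₁ hr₂, ?_⟩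
    have key : (x+y)*z - z*(x+y) = (x*z - z*x) + (y*z - z*y) := by noncomm_ring
    rw [key, e₁, e₂, ← mul_add]
  | add_right x y z hx hy hz h₁ h₂ =>
    obtain ⟨r₁, hr₁, e₁⟩ := h₁
    obtain ⟨r₂, hr₂, e₂⟩ := h₂
    refine ⟨r₁ + r₂, add_mem hr₁ hr₂, ?_⟩
    have key : x*(y+z) - (y+z)*x = (x*y - y*x) + (x*z - z*x) := by noncomm_ring
    rw [key, e₁, e₂, ← mul_add]
  | mul_left x y z hx hy hz h₁ h₂ =>
    obtain ⟨r₁, hr₁, e₁⟩ := h₁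
    obtain ⟨r₂, hr₂, e₂⟩ := h₂
    refine ⟨x * r₂ + r₁ * y, add_mem (mul_mem hx hr₂) (mul_mem hr₁ hy), ?_⟩
    have key : (x*y)*z - z*(x*y) = x*(y*z - z*y) + (x*z - z*x)*y := by
      simp only [mul_sub, sub_mul, mul_assoc]; abel
    rw [key, e₁, e₂, mul_add, ← mul_assoc x (Top K L) r₂, ← Top_comm K L x hx,
      mul_assoc, mul_assoc]
  | mul_right x y z hx hy hz h₁ h₂ =>
    obtain ⟨r₁, hr₁, e₁⟩ := h₁
    obtain ⟨r₂, hr₂, e₂⟩ := h₂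
    refine ⟨y * r₂ + r₁ * z, add_mem (mul_mem hy hr₂) (mul_mem hr₁ hz), ?_⟩
    have key : x*(y*z) - (y*z)*x = y*(x*z - z*x) + (x*y - y*x)*z := by
      simp only [mul_sub, sub_mul, mul_assoc]; abel
    rw [key, e₁, e₂, mul_add, ← mul_assoc y (Top K L) r₂, ← Top_comm K L y hy,
      mul_assoc, mul_assoc]

theorem rn_vanish : ∀ (l : List (Module.End K (Wm K L))), (∀ z ∈ l, z ∈ CTa K L) →
    ∀ a k r, r ∈ CTa K L → a = Top K L ^ k * r →
    ∃ r', r' ∈ CTa K L ∧ rnComm a l = Top K L ^ (k + l.length) * r' := by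
  intro l
  induction l with
  | nil => exact fun _ a k r hr ha => ⟨r, hr, by simpa [rnComm] using ha⟩
  | cons b l ih =>
    intro hl a k r hr ha
    have hb : b ∈ CTa K L := hl b List.mem_cons_self
    obtain ⟨r₂, hr₂, e₂⟩ := commMod K L r hr b hb
    have hcm : b * Top K L ^ k = Top K L ^ k * b := (Tpow_comm K L k b hb).symm
    have hab : a * b - b * a = Top K L ^ (k+1) * r₂ := by
      rw [ha, pow_succ]
      have h1 : (Top K L ^ k * r) * b - b * (Top K L ^ k * r)
          = Top K L ^ k * (r * b) - (b * Top K L ^ k) * r := by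
        simp only [mul_assoc]
      rw [h1, hcm, mul_assoc, ← mul_sub, e₂, ← mul_assoc]
    obtain ⟨r', hr', e'⟩ := ih (fun z hz => hl z (List.mem_cons_of_mem _ hz)) _ (k+1) r₂ hr₂ hab
    have hlen : k + 1 + l.length = k + (b :: l).length := by
      simp only [List.length_cons]; omega
    rw [hlen] at e'
    exact ⟨r', hr', e'⟩

/-- The representation of the free algebra. -/
noncomputable def phiMap : FreeAlgebra K (Fin 2) →ₐ[K] Module.End K (Wm K L) :=
  FreeAlgebra.lift K ![Xop K L, Yop K L]

theorem phi_x : phiMap K L (FreeAlgebra.ι K 0) = Xop K L := by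
  simp [phiMap]

theorem phi_y : phiMap K L (FreeAlgebra.ι K 1) = Yop K L := by
  simp [phiMap]

theorem phi_mem (v : FreeAlgebra K (Fin 2)) : phiMap K L v ∈ CTa K L := by
  induction v using FreeAlgebra.induction with
  | grade0 r => rw [AlgHom.commutes]; exact algebraMap_mem _ r
  | grade1 i =>
    fin_cases i
    · show phiMap K L (FreeAlgebra.ι K 0) ∈ CTa K L
      rw [phi_x]; exact Xop_mem K L
    · show phiMap K L (FreeAlgebra.ι K 1) ∈ CTa K L
      rw [phi_y]; exact Yop_mem K L
  | mul a b ha hb => rw [map_mul]; exact mul_mem ha hb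
  | add a b ha hb => rw [map_add]; exact add_mem ha hb

theorem phi_kill (v : FreeAlgebra K (Fin 2)) (hv : v ∈ Tideal (FreeAlgebra K (Fin 2)) (L+1)) :
    phiMap K L v = 0 := by
  have hker : v ∈ TwoSidedIdeal.ker (phiMap K L).toRingHom := by
    refine TwoSidedIdeal.mem_span_iff.mp hv _ ?_
    rintro w ⟨a, l, hlen, rfl⟩
    rw [SetLike.mem_coe, TwoSidedIdeal.mem_ker]
    show (phiMap K L).toRingHom (rnComm a l) = 0
    rw [map_rnComm (phiMap K L).toRingHom a l]
    obtain ⟨r', hr', e'⟩ := rn_vanish K L (l.map (phiMap K L))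
      (by rintro z hz; obtain ⟨w, hw, rfl⟩ := List.mem_map.mp hz; exact phi_mem K L w)
      (phiMap K L a) 0 (phiMap K L a) (phi_mem K L a) (by rw [pow_zero, one_mul])
    show rnComm (phiMap K L a) (l.map (phiMap K L)) = 0
    rw [e', zero_add, List.length_map, show l.length = L from by omega, Tpow_L, zero_mul]
  exact (TwoSidedIdeal.mem_ker _).mp hker

end Model

end CommPowAux

/-- **Corollary 2.** In the free associative unital algebra on two generators `x, y` over an
infinite field of characteristic `≠ 2, 3`, for `n ≥ 3` the power `[x, y]^(n-2)` does not
belong to `T⁽ⁿ⁾`, while `[x, y]^(n-1)` does; hence the nilpotency index of the commutator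
of the free generators in `F₂ / T⁽ⁿ⁾` equals `n - 1`. -/
theorem comm_pow_not_mem_Tideal
    (K : Type*) [Field K] [Infinite K] (h2 : (2 : K) ≠ 0) (h3 : (3 : K) ≠ 0)
    (n : ℕ) (hn : 3 ≤ n)
    (x y : FreeAlgebra K (Fin 2))
    (hx : x = FreeAlgebra.ι K 0) (hy : y = FreeAlgebra.ι K 1) :
    (x * y - y * x) ^ (n - 2) ∉ Tideal (FreeAlgebra K (Fin 2)) n ∧
    (x * y - y * x) ^ (n - 1) ∈ Tideal (FreeAlgebra K (Fin 2)) n := by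
  subst hx; subst hy
  constructor
  · -- non-membership: use the representation on `⊕_{j<n-1} K[u]·tʲ`.
    intro hmem
    have hmem' : (FreeAlgebra.ι K 0 * FreeAlgebra.ι K 1
        - FreeAlgebra.ι K 1 * FreeAlgebra.ι K 0) ^ (n - 2)
        ∈ Tideal (FreeAlgebra K (Fin 2)) ((n-1) + 1) := by
      rw [show (n-1) + 1 = n from by omega]
      exact hmem
    have h0 := CommPowAux.phi_kill K (n-1) _ hmem'
    rw [map_pow, map_sub, map_mul, map_mul, CommPowAux.phi_x, CommPowAux.phi_y,
      CommPowAux.comm_XY K (n-1)] at h0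
    have hT : CommPowAux.Top K (n-1) ^ (n-2) = 0 :=
      CommPowAux.pow_eq_zero_of_neg_pow_eq_zero h0
    have hne := CommPowAux.Tpow_ne K (n-1) (by omega)
    rw [show (n-1) - 1 = n - 2 from by omega] at hne
    exact hne hT
  · exact CommPowAux.mem_part K n hn h2
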